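/- Let E, F be locally convex topological vector spaces, T : E → F a continuous linear SK-homomorphism, and V a finite-dimensional normed space. Then T ⊕ id : E ⊕ V → F ⊕ V is an SK-homomorphism: for every continuous seminorm p on E ⊕ V there is a continuous seminorm q̄ on F ⊕ V with (T ⊕ id)(ker p) ⊇ ker q̄ ∩ im(T ⊕ id). -/

import Mathlib

/-- If `T : E → F` is an SK-homomorphism and `V` is a finite-dimensional normed space, then
`T ⊕ id : E ⊕ V → F ⊕ V` is an SK-homomorphism. -/
theorem sk_prod_id
    (E : Type*) [AddCommGroup E] [Module ℝ E] [TopologicalSpace E] [IsTopologicalAddGroup E]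
    [ContinuousSMul ℝ E]
    (F : Type*) [AddCommGroup F] [Module ℝ F] [TopologicalSpace F] [IsTopologicalAddGroup F]
    [ContinuousSMul ℝ F]
    (V : Type*) [NormedAddCommGroup V] [NormedSpace ℝ V] [FiniteDimensional ℝ V]
    (T : E →L[ℝ] F)
    (hT : ∀ p : Seminorm ℝ E, Continuous ⇑p → ∃ q : Seminorm ℝ F, Continuous ⇑q ∧
      ∀ y : F, y ∈ LinearMap.range (T : E →ₗ[ℝ] F) → q y = 0 → ∃ x : E, p x = 0 ∧ T x = y) :
    ∀ p : Seminorm ℝ (E × V), Continuous ⇑p →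
      ∃ q : Seminorm ℝ (F × V), Continuous ⇑q ∧
        ∀ z : F × V, z ∈ LinearMap.range (T.prodMap (ContinuousLinearMap.id ℝ V) : E × V →ₗ[ℝ] F × V) →
          q z = 0 → ∃ w : E × V, p w = 0 ∧ T.prodMap (ContinuousLinearMap.id ℝ V) w = z := by
  intro p hp
  set p₀ : Seminorm ℝ E := p.comp (LinearMap.inl ℝ E V) with hp₀def
  have hp₀ : Continuous ⇑p₀ := hp.comp (Continuous.prodMk_left 0 |>.comp continuous_id) |>.congr
    (fun x => rfl)
  obtain ⟨q, hq, hqker⟩ := hT p₀ hp₀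
  refine ⟨q.comp (LinearMap.fst ℝ F V) + (normSeminorm ℝ V).comp (LinearMap.snd ℝ F V), ?_, ?_⟩
  · exact Continuous.add (hq.comp continuous_fst) (continuous_norm.comp continuous_snd)
  · rintro ⟨y, v⟩ ⟨⟨x, u⟩, hxu⟩ hz
    simp only [Seminorm.add_apply, Seminorm.comp_apply, LinearMap.fst_apply, LinearMap.snd_apply,
      coe_normSeminorm] at hz
    have h1 : q y = 0 ∧ ‖v‖ = 0 := by
      constructor <;> nlinarith [apply_nonneg q y, norm_nonneg v]
    have hv : v = 0 := norm_eq_zero.mp h1.2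
    have hy : y ∈ LinearMap.range (T : E →ₗ[ℝ] F) := by
      refine ⟨x, ?_⟩
      have := congrArg Prod.fst hxu
      simpa using this
    obtain ⟨x₀, hx₀, hTx₀⟩ := hqker y hy h1.1
    exact ⟨(x₀, 0), hx₀, by simp [hTx₀, hv]⟩
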